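/- Let A be a real m×n matrix and b ∈ ℝ^m. Let x, h ∈ ℝ^n satisfy the normal equations J(x)ᵀ(J(x)h + f(x)) = 0 and 1 − μ(x)² (xᵀh) ≠ 0, and set α = 1/(1 − μ(x)² (xᵀh)). Then η(x + α h)² ≤ η(x)² − ‖J(x)h‖₂². In particular, if J(x)h ≠ 0 then η(x + α h) < η(x). -/
import Mathlib

open Matrix BigOperators

/-- Euclidean norm of a vector in ℝ^k. -/
noncomputable def vnorm {k : ℕ} (v : Fin k → ℝ) : ℝ := Real.sqrt (∑ i, (v i) ^ 2)

/-- μ(x) = (1 + xᵀx)^(−1/2). -/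
noncomputable def mu {n : ℕ} (x : Fin n → ℝ) : ℝ := 1 / Real.sqrt (1 + x ⬝ᵥ x)

/-- f(x) = μ(x)(Ax − b). -/
noncomputable def fTLS {m n : ℕ} (A : Matrix (Fin m) (Fin n) ℝ) (b : Fin m → ℝ)
    (x : Fin n → ℝ) : Fin m → ℝ := mu x • (A.mulVec x - b)

/-- η(x) = ‖f(x)‖₂ = ‖Ax − b‖₂/√(1 + xᵀx). -/
noncomputable def eta {m n : ℕ} (A : Matrix (Fin m) (Fin n) ℝ) (b : Fin m → ℝ)
    (x : Fin n → ℝ) : ℝ := vnorm (fTLS A b x)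

/-- Jacobian J(x) = μ(x) A − μ(x)³ (Ax − b) xᵀ. -/
noncomputable def jac {m n : ℕ} (A : Matrix (Fin m) (Fin n) ℝ) (b : Fin m → ℝ)
    (x : Fin n → ℝ) : Matrix (Fin m) (Fin n) ℝ :=
  mu x • A - (mu x) ^ 3 • Matrix.vecMulVec (A.mulVec x - b) x

lemma dot_self_nonneg' {k : ℕ} (v : Fin k → ℝ) : 0 ≤ v ⬝ᵥ v :=
  Finset.sum_nonneg fun i _ => mul_self_nonneg (v i)

lemma vnorm_sq {k : ℕ} (v : Fin k → ℝ) : vnorm v ^ 2 = v ⬝ᵥ v := by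
  unfold vnorm
  rw [Real.sq_sqrt (Finset.sum_nonneg fun i _ => sq_nonneg (v i))]
  simp [dotProduct, sq]

lemma vnorm_nonneg {k : ℕ} (v : Fin k → ℝ) : 0 ≤ vnorm v := Real.sqrt_nonneg _

lemma mu_sq {n : ℕ} (x : Fin n → ℝ) : mu x ^ 2 = 1 / (1 + x ⬝ᵥ x) := by
  have h1 : (0:ℝ) < 1 + x ⬝ᵥ x := by have := dot_self_nonneg' x; linarith
  unfold mu
  rw [div_pow, one_pow, Real.sq_sqrt h1.le]

lemma eta_sq {m n : ℕ} (A : Matrix (Fin m) (Fin n) ℝ) (b : Fin m → ℝ) (x : Fin n → ℝ) :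
    eta A b x ^ 2 = mu x ^ 2 * ((A.mulVec x - b) ⬝ᵥ (A.mulVec x - b)) := by
  unfold eta fTLS
  rw [vnorm_sq, smul_dotProduct, dotProduct_smul, smul_eq_mul, smul_eq_mul, sq]
  ring

lemma jac_mulVec {m n : ℕ} (A : Matrix (Fin m) (Fin n) ℝ) (b : Fin m → ℝ)
    (x h : Fin n → ℝ) :
    (jac A b x).mulVec h
      = mu x • A.mulVec h - (mu x ^ 3 * (x ⬝ᵥ h)) • (A.mulVec x - b) := by
  unfold jac
  rw [Matrix.sub_mulVec, Matrix.smul_mulVec, Matrix.smul_mulVec]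
  congr 1
  funext i
  simp only [Matrix.mulVec, Matrix.vecMulVec_apply, dotProduct, Pi.smul_apply,
    smul_eq_mul, Pi.sub_apply]
  rw [Finset.mul_sum, Finset.mul_sum, Finset.sum_mul]
  exact Finset.sum_congr rfl fun j _ => by ring

theorem stmt_8 {m n : ℕ} (A : Matrix (Fin m) (Fin n) ℝ) (b : Fin m → ℝ)
    (x h : Fin n → ℝ)
    (hnormal : (jac A b x)ᵀ.mulVec ((jac A b x).mulVec h + fTLS A b x) = 0)
    (hne : 1 - (mu x) ^ 2 * (x ⬝ᵥ h) ≠ 0)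
    (α : ℝ) (hα : α = 1 / (1 - (mu x) ^ 2 * (x ⬝ᵥ h))) :
    eta A b (x + α • h) ^ 2 ≤ eta A b x ^ 2 - vnorm ((jac A b x).mulVec h) ^ 2 ∧
    ((jac A b x).mulVec h ≠ 0 → eta A b (x + α • h) < eta A b x) := by
  have hXnn : 0 ≤ x ⬝ᵥ x := dot_self_nonneg' x
  have hX1 : (0:ℝ) < 1 + x ⬝ᵥ x := by linarith
  have hmu2 : mu x ^ 2 = 1 / (1 + x ⬝ᵥ x) := mu_sq x
  have hmupos : 0 < mu x ^ 2 := by rw [hmu2]; positivity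
  have hα1 : α * (1 - mu x ^ 2 * (x ⬝ᵥ h)) = 1 := by
    rw [hα, one_div, inv_mul_cancel₀ hne]
  -- key vector identity: μ • (A(x+αh) - b) = α • (f + Jh)
  have hkey : mu x • (A.mulVec (x + α • h) - b)
      = α • (fTLS A b x + (jac A b x).mulVec h) := by
    rw [jac_mulVec]
    unfold fTLS
    rw [Matrix.mulVec_add, Matrix.mulVec_smul]
    funext i
    simp only [Pi.smul_apply, Pi.add_apply, Pi.sub_apply, smul_eq_mul]
    linear_combination (-(mu x * (A.mulVec x i - b i))) * hα1
  -- normal equations ⇒ g ⬝ᵥ (g + f) = 0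
  have hquad : ((jac A b x).mulVec h) ⬝ᵥ ((jac A b x).mulVec h + fTLS A b x) = 0 := by
    have h0 := congrArg (fun v => h ⬝ᵥ v) hnormal
    simpa [dotProduct_mulVec, Matrix.vecMul_transpose] using h0
  -- expand: N = f⬝f - g⬝g
  have hN : (fTLS A b x + (jac A b x).mulVec h) ⬝ᵥ (fTLS A b x + (jac A b x).mulVec h)
      = fTLS A b x ⬝ᵥ fTLS A b x - (jac A b x).mulVec h ⬝ᵥ (jac A b x).mulVec h := by
    have h1 : (jac A b x).mulVec h ⬝ᵥ fTLS A b x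
        = -((jac A b x).mulVec h ⬝ᵥ (jac A b x).mulVec h) := by
      have := hquad
      rw [dotProduct_add] at this
      linarith
    rw [add_dotProduct, dotProduct_add, dotProduct_add,
      dotProduct_comm (fTLS A b x) ((jac A b x).mulVec h), h1]
    ring
  -- μ² Q = α² N where Q is the new residual squared
  have hQ : mu x ^ 2 * ((A.mulVec (x + α • h) - b) ⬝ᵥ (A.mulVec (x + α • h) - b))
      = α ^ 2 * ((fTLS A b x + (jac A b x).mulVec h) ⬝ᵥ (fTLS A b x + (jac A b x).mulVec h)) := by
    have h0 := congrArg (fun v => v ⬝ᵥ v) hkey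
    simp only [smul_dotProduct, dotProduct_smul, smul_eq_mul] at h0
    linear_combination h0
  -- denominator bound
  have hCS : (x ⬝ᵥ h) ^ 2 ≤ (x ⬝ᵥ x) * (h ⬝ᵥ h) := by
    have := Finset.sum_mul_sq_le_sq_mul_sq Finset.univ x h
    simpa [dotProduct, sq] using this
  have hmuX : mu x ^ 2 * (1 + x ⬝ᵥ x) = 1 := by
    rw [hmu2]; field_simp
  have hHnn : 0 ≤ h ⬝ᵥ h := dot_self_nonneg' h
  have hms : mu x ^ 2 * (x ⬝ᵥ h) ^ 2 ≤ h ⬝ᵥ h := by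
    nlinarith [hmupos, hCS, hmuX, hHnn]
  have hYexp : (x + α • h) ⬝ᵥ (x + α • h)
      = x ⬝ᵥ x + 2 * α * (x ⬝ᵥ h) + α ^ 2 * (h ⬝ᵥ h) := by
    rw [add_dotProduct, dotProduct_add, dotProduct_add, smul_dotProduct,
      dotProduct_smul, smul_dotProduct, dotProduct_smul,
      dotProduct_comm h x]
    simp [smul_eq_mul]
    ring
  have hdenomEq : α ^ 2 * (1 + x ⬝ᵥ x)
      = 1 + x ⬝ᵥ x + 2 * α * (x ⬝ᵥ h) + α ^ 2 * (mu x ^ 2 * (x ⬝ᵥ h) ^ 2) := by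
    have e1 : α * (1 - mu x ^ 2 * (x ⬝ᵥ h)) - 1 = 0 := by linarith [hα1]
    have e2 : mu x ^ 2 * (1 + x ⬝ᵥ x) - 1 = 0 := by linarith [hmuX]
    have key : mu x ^ 2 * (α ^ 2 * (1 + x ⬝ᵥ x)
        - (1 + x ⬝ᵥ x + 2 * α * (x ⬝ᵥ h) + α ^ 2 * (mu x ^ 2 * (x ⬝ᵥ h) ^ 2))) = 0 := by
      linear_combination (α + α * (mu x ^ 2 * (x ⬝ᵥ h)) + 1) * hα1 + (α ^ 2 - 1) * hmuX
    have := mul_eq_zero.mp key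
    rcases this with h' | h'
    · exact absurd h' (ne_of_gt hmupos)
    · linarith
  have hD : α ^ 2 * (1 + x ⬝ᵥ x) ≤ 1 + (x + α • h) ⬝ᵥ (x + α • h) := by
    rw [hYexp, hdenomEq]
    nlinarith [hms, sq_nonneg α]
  have hYpos : (0:ℝ) < 1 + (x + α • h) ⬝ᵥ (x + α • h) := by
    have := dot_self_nonneg' (x + α • h); linarith
  have hNnn : 0 ≤ (fTLS A b x + (jac A b x).mulVec h) ⬝ᵥ (fTLS A b x + (jac A b x).mulVec h) :=
    dot_self_nonneg' _
  -- main bound: η(y)² ≤ N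
  have hmain : eta A b (x + α • h) ^ 2
      ≤ (fTLS A b x + (jac A b x).mulVec h) ⬝ᵥ (fTLS A b x + (jac A b x).mulVec h) := by
    rw [eta_sq, mu_sq]
    rw [div_mul_eq_mul_div, one_mul, div_le_iff₀ hYpos]
    -- Q ≤ N * (1 + Y)
    have t1 : mu x ^ 2 * (α ^ 2 * (1 + x ⬝ᵥ x))
        ≤ mu x ^ 2 * (1 + (x + α • h) ⬝ᵥ (x + α • h)) :=
      mul_le_mul_of_nonneg_left hD hmupos.le
    have t2 : mu x ^ 2 * (α ^ 2 * (1 + x ⬝ᵥ x)) = α ^ 2 := by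
      calc mu x ^ 2 * (α ^ 2 * (1 + x ⬝ᵥ x)) = α ^ 2 * (mu x ^ 2 * (1 + x ⬝ᵥ x)) := by ring
        _ = α ^ 2 := by rw [hmuX, mul_one]
    have hα2 : α ^ 2 ≤ mu x ^ 2 * (1 + (x + α • h) ⬝ᵥ (x + α • h)) := by linarith
    have step1 : α ^ 2 * ((fTLS A b x + (jac A b x).mulVec h) ⬝ᵥ (fTLS A b x + (jac A b x).mulVec h))
        ≤ (mu x ^ 2 * (1 + (x + α • h) ⬝ᵥ (x + α • h)))
          * ((fTLS A b x + (jac A b x).mulVec h) ⬝ᵥ (fTLS A b x + (jac A b x).mulVec h)) :=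
      mul_le_mul_of_nonneg_right hα2 hNnn
    have step2 : mu x ^ 2 * ((A.mulVec (x + α • h) - b) ⬝ᵥ (A.mulVec (x + α • h) - b))
        ≤ mu x ^ 2 * (((fTLS A b x + (jac A b x).mulVec h) ⬝ᵥ (fTLS A b x + (jac A b x).mulVec h))
            * (1 + (x + α • h) ⬝ᵥ (x + α • h))) := by
      rw [hQ]
      calc α ^ 2 * ((fTLS A b x + (jac A b x).mulVec h) ⬝ᵥ (fTLS A b x + (jac A b x).mulVec h))
          ≤ (mu x ^ 2 * (1 + (x + α • h) ⬝ᵥ (x + α • h)))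
            * ((fTLS A b x + (jac A b x).mulVec h) ⬝ᵥ (fTLS A b x + (jac A b x).mulVec h)) := step1
        _ = mu x ^ 2 * (((fTLS A b x + (jac A b x).mulVec h) ⬝ᵥ (fTLS A b x + (jac A b x).mulVec h))
            * (1 + (x + α • h) ⬝ᵥ (x + α • h))) := by ring
    exact le_of_mul_le_mul_left step2 hmupos
  have hfin1 : eta A b (x + α • h) ^ 2
      ≤ eta A b x ^ 2 - vnorm ((jac A b x).mulVec h) ^ 2 := by
    have : eta A b x ^ 2 = fTLS A b x ⬝ᵥ fTLS A b x := vnorm_sq _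
    rw [this, vnorm_sq]
    calc eta A b (x + α • h) ^ 2 ≤ _ := hmain
      _ = _ := hN
  refine ⟨hfin1, fun hgne => ?_⟩
  have hgpos : 0 < vnorm ((jac A b x).mulVec h) ^ 2 := by
    rw [vnorm_sq]
    rcases (dot_self_nonneg' ((jac A b x).mulVec h)).lt_or_eq with h' | h'
    · exact h'
    · exfalso
      apply hgne
      funext i
      have h0 := h'.symm
      unfold dotProduct at h0
      have := (Finset.sum_eq_zero_iff_of_nonneg
        (fun i _ => mul_self_nonneg ((jac A b x).mulVec h i))).mp h0 i (Finset.mem_univ i)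
      simpa using mul_self_eq_zero.mp this
  have hlt : eta A b (x + α • h) ^ 2 < eta A b x ^ 2 := by linarith
  exact lt_of_pow_lt_pow_left₀ 2 (vnorm_nonneg _) hlt
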